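/- The group of collineations of the Hall affine plane A_H generated by all translations τ_{a,b} and all linear maps λ_{a,b} acts transitively on the set of all BF lines (the lines that are vertical or of type 1). -/

import Mathlib

open Polynomial

/-- The Hall system multiplication on `F × F`, with defining polynomial `x^2 - r*x - s`. -/
def hallMul {F : Type*} [Field F] [DecidableEq F] (r s : F) (a b : F × F) : F × F :=
  if b.2 = 0 then (a.1 * b.1, a.2 * b.1)
  else (a.1 * b.1 - a.2 * b.2⁻¹ * (b.1 ^ 2 - r * b.1 - s),
        a.1 * b.2 - a.2 * b.1 + a.2 * r)

/-- Vertical line `[c] = {(c, y)}` in the Hall affine plane. -/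
def vertLine {F : Type*} (c : F × F) : Set ((F × F) × (F × F)) := {P | P.1 = c}

/-- Non-vertical line `[m, k] = {(x, x·m + k)}` in the Hall affine plane. -/
def slopeLine {F : Type*} [Field F] [DecidableEq F] (r s : F) (m k : F × F) :
    Set ((F × F) × (F × F)) :=
  {P | P.2 = hallMul r s P.1 m + k}

/-- The lines of the Hall affine plane `A_H`. -/
def IsHallLine {F : Type*} [Field F] [DecidableEq F] (r s : F)
    (ℓ : Set ((F × F) × (F × F))) : Prop :=
  (∃ c : F × F, ℓ = vertLine c) ∨ ∃ m k : F × F, ℓ = slopeLine r s m k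

/-- A collineation of the Hall affine plane: a bijection of the point set mapping
every line onto a line. -/
def IsCollineation {F : Type*} [Field F] [DecidableEq F] (r s : F)
    (φ : (F × F) × (F × F) → (F × F) × (F × F)) : Prop :=
  Function.Bijective φ ∧ ∀ ℓ, IsHallLine r s ℓ → IsHallLine r s (φ '' ℓ)

/-- The BF lines: vertical lines and type 1 lines (slope in the basefield). -/
def BFlines {F : Type*} [Field F] [DecidableEq F] (r s : F) :
    Set (Set ((F × F) × (F × F))) :=
  {ℓ | (∃ c : F × F, ℓ = vertLine c) ∨ ∃ m k : F × F, m.2 = 0 ∧ ℓ = slopeLine r s m k}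

/-- The NBF lines: type 2 lines (slope not in the basefield). -/
def NBFlines {F : Type*} [Field F] [DecidableEq F] (r s : F) :
    Set (Set ((F × F) × (F × F))) :=
  {ℓ | ∃ m k : F × F, m.2 ≠ 0 ∧ ℓ = slopeLine r s m k}

/-- The translation `τ_{a,b} : (x,y) ↦ (x + a, y + b)`. -/
def tauMap {F : Type*} [Field F] (a b : F × F) :
    (F × F) × (F × F) → (F × F) × (F × F) :=
  fun P => (P.1 + a, P.2 + b)

/-- The linear map `λ_{a,b} : (x,y) ↦ ((-ar+b)·x + a·y, as·x + b·y)`. -/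
def lambdaMap {F : Type*} [Field F] (r s a b : F) :
    (F × F) × (F × F) → (F × F) × (F × F) :=
  fun P => ((-(a * r) + b) • P.1 + a • P.2, (a * s) • P.1 + b • P.2)

/-- The translations, as permutations of the point set. -/
def TRperms (F : Type*) [Field F] : Set (Equiv.Perm ((F × F) × (F × F))) :=
  {g | ∃ a b : F × F, ⇑g = tauMap a b}

/-- The linear maps `λ_{a,b}`, as permutations of the point set. -/
def LNRperms {F : Type*} [Field F] (r s : F) : Set (Equiv.Perm ((F × F) × (F × F))) :=
  {g | ∃ a b : F, (a, b) ≠ ((0 : F), (0 : F)) ∧ ⇑g = lambdaMap r s a b}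

section Aux

variable {F : Type*} [Field F] [DecidableEq F]

/-- The polynomial `x^2 - r x - s` has no root when irreducible. -/
lemma hall_no_root {r s : F} (hirr : Irreducible (X ^ 2 - C r * X - C s : F[X]))
    (b : F) : b ^ 2 - r * b - s ≠ 0 := by
  intro hb
  have hroot : (X ^ 2 - C r * X - C s : F[X]).IsRoot b := by
    simp [Polynomial.IsRoot, hb]
  obtain ⟨g, hg⟩ := Polynomial.dvd_iff_isRoot.mpr hroot
  have h2 : (X ^ 2 - C r * X - C s : F[X]).natDegree = 2 := by compute_degree!
  rcases hirr.isUnit_or_isUnit hg with h | h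
  · exact Polynomial.not_isUnit_X_sub_C b h
  · obtain ⟨u, hu, hCu⟩ := Polynomial.isUnit_iff.mp h
    rw [hg, ← hCu] at h2
    have hu0 : u ≠ 0 := hu.ne_zero
    rw [Polynomial.natDegree_mul (Polynomial.X_sub_C_ne_zero b) (by simpa using hu0)] at h2
    simp [Polynomial.natDegree_X_sub_C] at h2

/-- The translation as a permutation. -/
def tauPerm (a b : F × F) : Equiv.Perm ((F × F) × (F × F)) :=
  (Equiv.addRight a).prodCongr (Equiv.addRight b)

lemma tauPerm_coe (a b : F × F) : ⇑(tauPerm a b) = tauMap a b := rfl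

/-- The linear map λ_{1,b} as a permutation, given nonvanishing of the determinant. -/
def lamPerm (r s b : F) (hd : b ^ 2 - r * b - s ≠ 0) :
    Equiv.Perm ((F × F) × (F × F)) where
  toFun := lambdaMap r s 1 b
  invFun := fun P => ((b ^ 2 - r * b - s)⁻¹ • (b • P.1 - P.2),
      (b ^ 2 - r * b - s)⁻¹ • ((b - r) • P.2 - s • P.1))
  left_inv := by
    rintro ⟨⟨x1, x2⟩, ⟨y1, y2⟩⟩
    simp only [lambdaMap, Prod.smul_mk, Prod.mk_add_mk, Prod.mk_sub_mk, smul_eq_mul,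
      Prod.mk.injEq]
    refine ⟨⟨?_, ?_⟩, ?_, ?_⟩ <;> field_simp
    · linear_combination x1 * mul_inv_cancel₀ hd
    · linear_combination x2 * mul_inv_cancel₀ hd
    · linear_combination y1 * mul_inv_cancel₀ hd
    · linear_combination y2 * mul_inv_cancel₀ hd
  right_inv := by
    rintro ⟨⟨x1, x2⟩, ⟨y1, y2⟩⟩
    simp only [lambdaMap, Prod.smul_mk, Prod.mk_add_mk, Prod.mk_sub_mk, smul_eq_mul,
      Prod.mk.injEq]
    refine ⟨⟨?_, ?_⟩, ?_, ?_⟩ <;> field_simp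
    · linear_combination x1 * mul_inv_cancel₀ hd
    · linear_combination x2 * mul_inv_cancel₀ hd
    · linear_combination y1 * mul_inv_cancel₀ hd
    · linear_combination y2 * mul_inv_cancel₀ hd

lemma lamPerm_coe (r s b : F) (hd : b ^ 2 - r * b - s ≠ 0) :
    ⇑(lamPerm r s b hd) = lambdaMap r s 1 b := rfl

lemma tauPerm_image_vert (a b c : F × F) :
    ⇑(tauPerm a b) '' vertLine c = vertLine (c + a) := by
  ext P
  rw [Equiv.image_eq_preimage_symm]
  simp only [tauPerm, Set.mem_preimage, vertLine, Set.mem_setOf_eq, Equiv.prodCongr_symm,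
    Equiv.prodCongr_apply, Prod.map_fst]
  constructor
  · intro h
    have : ((Equiv.addRight a).symm P.1 : F × F) = c := h
    simp only [Equiv.addRight_symm, Equiv.coe_addRight] at this
    rw [← this]; abel
  · intro h
    show ((Equiv.addRight a).symm P.1 : F × F) = c
    simp only [Equiv.addRight_symm, Equiv.coe_addRight, h]; abel

lemma lamPerm_image_vert0 (r s b : F) (hd : b ^ 2 - r * b - s ≠ 0) :
    ⇑(lamPerm r s b hd) '' vertLine 0 = slopeLine r s (b, 0) 0 := by
  have hinv : (b ^ 2 - r * b - s)⁻¹ ≠ 0 := inv_ne_zero hd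
  ext P
  rw [Equiv.image_eq_preimage_symm]
  have hmul : hallMul r s P.1 ((b : F), (0 : F)) + 0 = b • P.1 := by
    simp [hallMul, Prod.ext_iff, mul_comm]
  constructor
  · intro h
    have h' : (b ^ 2 - r * b - s)⁻¹ • (b • P.1 - P.2) = (0 : F × F) := h
    have h0 := (smul_eq_zero.mp h').resolve_left hinv
    show P.2 = hallMul r s P.1 ((b : F), (0 : F)) + 0
    rw [hmul]
    exact (sub_eq_zero.mp h0).symm
  · intro h
    have h' : P.2 = hallMul r s P.1 ((b : F), (0 : F)) + 0 := h
    show (b ^ 2 - r * b - s)⁻¹ • (b • P.1 - P.2) = (0 : F × F)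
    rw [h', hmul, sub_self, smul_zero]

lemma tauPerm_image_slope (r s b : F) (k : F × F) :
    ⇑(tauPerm (0 : F × F) k) '' slopeLine r s (b, 0) 0 = slopeLine r s (b, 0) k := by
  ext ⟨x, y⟩
  rw [Equiv.image_eq_preimage_symm]
  simp only [Set.mem_preimage, tauPerm, Equiv.prodCongr_symm, Equiv.prodCongr_apply,
    Prod.map_apply, Equiv.addRight_symm, Equiv.coe_addRight, slopeLine, Set.mem_setOf_eq,
    add_zero]
  constructor
  · intro h
    rw [show x + -0 = x by abel] at h
    rw [← h]; abel
  · intro h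
    rw [show x + -0 = x by abel, h]; abel

lemma exists_g_to_line {r s : F}
    (hirr : Irreducible (X ^ 2 - C r * X - C s : F[X]))
    (ℓ : Set ((F × F) × (F × F))) (hℓ : ℓ ∈ BFlines r s) :
    ∃ g ∈ Subgroup.closure (TRperms F ∪ LNRperms r s),
      ⇑g '' vertLine (0 : F × F) = ℓ := by
  rcases hℓ with ⟨c, rfl⟩ | ⟨m, k, hm2, rfl⟩
  · refine ⟨tauPerm c 0, Subgroup.subset_closure (Or.inl ⟨c, 0, tauPerm_coe c 0⟩), ?_⟩
    rw [tauPerm_image_vert]; rw [zero_add]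
  · have hd := hall_no_root hirr m.1
    have hmeq : m = (m.1, 0) := by ext; rfl; exact hm2
    refine ⟨tauPerm 0 k * lamPerm r s m.1 hd,
      mul_mem (Subgroup.subset_closure (Or.inl ⟨0, k, tauPerm_coe 0 k⟩))
        (Subgroup.subset_closure (Or.inr ⟨1, m.1, by simp, lamPerm_coe r s m.1 hd⟩)), ?_⟩
    conv_rhs => rw [hmeq]
    rw [show ⇑(tauPerm (0 : F × F) k * lamPerm r s m.1 hd)
        = ⇑(tauPerm (0 : F × F) k) ∘ ⇑(lamPerm r s m.1 hd) from rfl,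
      Set.image_comp, lamPerm_image_vert0, tauPerm_image_slope]

end Aux

/-- The group generated by the translations and the linear maps acts transitively on the
set of all BF lines. -/
theorem TR_LNR_transitive_on_BF {F : Type*} [Field F] [Fintype F] [DecidableEq F]
    (q : ℕ) (hq : Fintype.card F = q) (r s : F)
    (hirr : Irreducible (X ^ 2 - C r * X - C s : F[X])) :
    ∀ ℓ ℓ' : Set ((F × F) × (F × F)), ℓ ∈ BFlines r s → ℓ' ∈ BFlines r s →
      ∃ g ∈ Subgroup.closure (TRperms F ∪ LNRperms r s), ⇑g '' ℓ = ℓ' := by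
  intro ℓ ℓ' hℓ hℓ'
  obtain ⟨g, hg, hgim⟩ := exists_g_to_line hirr ℓ hℓ
  obtain ⟨g', hg', hgim'⟩ := exists_g_to_line hirr ℓ' hℓ'
  refine ⟨g' * g⁻¹, mul_mem hg' (inv_mem hg), ?_⟩
  have : ⇑(g' * g⁻¹) '' ℓ = ⇑g' '' (⇑g⁻¹ '' ℓ) := by
    rw [show ⇑(g' * g⁻¹) = ⇑g' ∘ ⇑g⁻¹ from rfl, Set.image_comp]
  rw [this, ← hgim, show ⇑g⁻¹ = ⇑g.symm from rfl, Equiv.symm_image_image, hgim']
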